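/- Every tree T with maximum degree Δ ≥ 1 satisfies Δ ≤ χ'_ss(T) ≤ Δ + 1. -/

import Mathlib

open SimpleGraph

variable {V : Type*}

/-- The set of vertices covered by a set of edges. -/
def coveredVerts (M : Set (Sym2 V)) : Set V := {x | ∃ e ∈ M, x ∈ e}

/-- `M` is a matching of `G`: a set of pairwise disjoint edges of `G`. -/
def IsGraphMatching (G : SimpleGraph V) (M : Set (Sym2 V)) : Prop :=
  M ⊆ G.edgeSet ∧ ∀ e ∈ M, ∀ f ∈ M, e ≠ f → ∀ x, x ∈ e → x ∉ f

/-- `u` has degree 1 in the subgraph of `G` induced by `S` (it has a unique neighbour in `S`). -/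
def degOneIn (G : SimpleGraph V) (S : Set V) (u : V) : Prop :=
  ∃! w, w ∈ S ∧ G.Adj u w

/-- `M` is a semistrong matching of `G`. -/
def IsSemistrongMatching (G : SimpleGraph V) (M : Set (Sym2 V)) : Prop :=
  IsGraphMatching G M ∧ ∀ e ∈ M, ∃ u, u ∈ e ∧ degOneIn G (coveredVerts M) u

/-- The color class of color `c` under the edge coloring `φ`. -/
def colorClass (G : SimpleGraph V) (φ : Sym2 V → ℕ) (c : ℕ) : Set (Sym2 V) :=
  {e | e ∈ G.edgeSet ∧ φ e = c}

/-- `φ` is a semistrong edge coloring of `G`. -/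
def IsSemistrongColoring (G : SimpleGraph V) (φ : Sym2 V → ℕ) : Prop :=
  ∀ c, IsSemistrongMatching G (colorClass G φ c)

/-- `φ` uses at most `k` colors on the edges of `G`. -/
def UsesAtMost (G : SimpleGraph V) (φ : Sym2 V → ℕ) (k : ℕ) : Prop :=
  ∀ e ∈ G.edgeSet, φ e < k

/-- The semistrong chromatic index of `G`. -/
noncomputable def ssChromIndex (G : SimpleGraph V) : ℕ :=
  sInf {k | ∃ φ : Sym2 V → ℕ, UsesAtMost G φ k ∧ IsSemistrongColoring G φ}



section TreeAux
open Walk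
variable {V : Type*} (T : SimpleGraph V) (hT : T.IsTree) (r : V)

noncomputable def tpath (v : V) : T.Walk r v := (hT.existsUnique_path r v).choose

lemma tpath_isPath (v : V) : (tpath T hT r v).IsPath :=
  (hT.existsUnique_path r v).choose_spec.1

lemma tpath_unique {v : V} (p : T.Walk r v) (hp : p.IsPath) : p = tpath T hT r v :=
  (hT.existsUnique_path r v).choose_spec.2 p hp

lemma tpath_r : tpath T hT r r = Walk.nil :=
  (tpath_unique T hT r Walk.nil IsPath.nil).symm

noncomputable def dep (v : V) : ℕ := (tpath T hT r v).length

noncomputable def par (v : V) : V := (tpath T hT r v).reverse.getVert 1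

lemma dep_r : dep T hT r r = 0 := by simp [dep, tpath_r]

lemma par_r : par T hT r r = r := by
  rw [par, tpath_r]
  exact getVert_of_length_le _ (by simp)

lemma par_of_concat {u v : V} (h : T.Adj u v)
    (hq : tpath T hT r v = (tpath T hT r u).concat h) : par T hT r v = u := by
  rw [par, hq, reverse_concat, getVert_cons_succ, getVert_zero]

lemma exists_concat {v : V} (hv : v ≠ r) :
    ∃ (u : V) (h : T.Adj u v), tpath T hT r v = (tpath T hT r u).concat h := by
  have hnil : ¬ (tpath T hT r v).reverse.Nil := not_nil_of_ne hv
  obtain ⟨u, h, q, hq⟩ := not_nil_iff.mp hnil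
  have hrev : tpath T hT r v = q.reverse.concat h.symm := by
    have := congrArg Walk.reverse hq
    rwa [reverse_reverse, reverse_cons] at this
  have hqp : q.reverse.IsPath := by
    have := tpath_isPath T hT r v
    rw [hrev, Walk.concat] at this
    exact this.of_append_left
  exact ⟨u, h.symm, by rw [hrev, tpath_unique T hT r q.reverse hqp]⟩

lemma tpath_par {v : V} (hv : v ≠ r) :
    ∃ h : T.Adj (par T hT r v) v,
      tpath T hT r v = (tpath T hT r (par T hT r v)).concat h := by
  obtain ⟨u, h, hq⟩ := exists_concat T hT r hv
  have := par_of_concat T hT r h hq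
  subst this
  exact ⟨h, hq⟩

lemma adj_par {v : V} (hv : v ≠ r) : T.Adj (par T hT r v) v :=
  (tpath_par T hT r hv).1

lemma dep_par {v : V} (hv : v ≠ r) : dep T hT r (par T hT r v) + 1 = dep T hT r v := by
  obtain ⟨h, hq⟩ := tpath_par T hT r hv
  rw [dep, dep, hq, length_concat]

lemma orient {a b : V} (h : T.Adj a b) :
    par T hT r b = a ∨ par T hT r a = b := by
  classical
  by_cases hb : b ∈ (tpath T hT r a).support
  · right
    have htake := (tpath_isPath T hT r a).takeUntil hb
    have hdrop := (tpath_isPath T hT r a).dropUntil hb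
    have hsingle : (Walk.cons h.symm Walk.nil : T.Walk b a).IsPath := by
      simp [Walk.cons_isPath_iff, h.ne']
    have hdeq : (tpath T hT r a).dropUntil b hb = Walk.cons h.symm Walk.nil :=
      ((hT.existsUnique_path b a).unique hdrop hsingle)
    have hspec := (tpath T hT r a).take_spec hb
    have hconcat : tpath T hT r a = ((tpath T hT r a).takeUntil b hb).concat h.symm := by
      rw [hdeq] at hspec
      exact hspec.symm
    rw [tpath_unique T hT r _ htake] at hconcat
    exact par_of_concat T hT r h.symm hconcat
  · left
    have hpath : ((tpath T hT r a).concat h).IsPath := by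
      rw [Walk.isPath_def, Walk.support_concat,
        List.nodup_append']
      refine ⟨(tpath_isPath T hT r a).2, List.nodup_singleton b, ?_⟩
      intro x hx hx'
      simp only [List.mem_singleton] at hx'
      exact hb (hx' ▸ hx)
    exact par_of_concat T hT r h (tpath_unique T hT r _ hpath).symm

lemma child_ne_r {a b : V} (h : T.Adj a b) (hpar : par T hT r b = a) : b ≠ r := by
  rintro rfl
  rw [par_r] at hpar
  subst hpar
  exact h.ne rfl

noncomputable def pickInj {W : Type*} (s : Finset W) (t : Finset ℕ) : W → ℕ :=
  if h : s.card ≤ t.card then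
    Classical.choose ((Set.toFinite (↑s : Set W)).exists_injOn_of_encard_le
      (by rw [Set.encard_coe_eq_coe_finsetCard, Set.encard_coe_eq_coe_finsetCard]
          exact_mod_cast h))
  else fun _ => 0

lemma pickInj_spec {W : Type*} {s : Finset W} {t : Finset ℕ} (h : s.card ≤ t.card) :
    (∀ x ∈ s, pickInj s t x ∈ t) ∧ Set.InjOn (pickInj s t) ↑s := by
  rw [pickInj, dif_pos h]
  have hsp := Classical.choose_spec ((Set.toFinite (↑s : Set W)).exists_injOn_of_encard_le
      (t := (↑t : Set ℕ))
      (by rw [Set.encard_coe_eq_coe_finsetCard, Set.encard_coe_eq_coe_finsetCard]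
          exact_mod_cast h))
  exact ⟨fun x hx => by simpa using hsp.1 (by simpa using hx), hsp.2⟩

variable [Fintype V]

open Classical in
noncomputable def children (u : V) : Finset V :=
  Finset.univ.filter (fun v => par T hT r v = u ∧ v ≠ r)

open Classical in
lemma mem_children {u v : V} :
    v ∈ children T hT r u ↔ par T hT r v = u ∧ v ≠ r := by
  simp [children]

variable (n : ℕ)

open Classical in
noncomputable def col : V → ℕ := fun v =>
  if hv : v = r then 0
  else pickInj (children T hT r (par T hT r v))
    (Finset.range (n + 1) \
      (if hu : par T hT r v = r then ∅
       else if hpu : par T hT r (par T hT r v) = r then {col (par T hT r v)}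
       else {col (par T hT r v), col (par T hT r (par T hT r v))})) v
termination_by v => dep T hT r v
decreasing_by
  · have h1 := dep_par T hT r hv
    omega
  · have h1 := dep_par T hT r hv
    omega
  · have h1 := dep_par T hT r hv
    have h2 := dep_par T hT r hu
    omega

open Classical in
noncomputable def forb (u : V) : Finset ℕ :=
  if u = r then ∅
  else if par T hT r u = r then {col T hT r n u}
  else {col T hT r n u, col T hT r n (par T hT r u)}

open Classical in
lemma col_eq {v : V} (hv : v ≠ r) :
    col T hT r n v = pickInj (children T hT r (par T hT r v))
      (Finset.range (n + 1) \ forb T hT r n (par T hT r v)) v := by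
  rw [col, dif_neg hv, forb]
  by_cases hu : par T hT r v = r
  · rw [dif_pos hu, if_pos hu]
  · rw [dif_neg hu, if_neg hu]
    by_cases hpu : par T hT r (par T hT r v) = r
    · rw [dif_pos hpu, if_pos hpu]
    · rw [dif_neg hpu, if_neg hpu]

variable [DecidableRel T.Adj]

lemma children_subset (u : V) : children T hT r u ⊆ T.neighborFinset u := by
  intro v hv
  rw [mem_children] at hv
  rw [mem_neighborFinset]
  exact hv.1 ▸ adj_par T hT r hv.2

lemma card_children_le (u : V) : (children T hT r u).card ≤ T.degree u :=
  Finset.card_le_card (children_subset T hT r u)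

lemma par_not_mem_children {u : V} (hu : u ≠ r) : par T hT r u ∉ children T hT r u := by
  intro hmem
  rw [mem_children] at hmem
  have h1 := dep_par T hT r hu
  have h2 := dep_par T hT r hmem.2
  rw [hmem.1] at h2
  omega

open Classical in
lemma card_children_succ_le {u : V} (hu : u ≠ r) :
    (children T hT r u).card + 1 ≤ T.degree u := by
  classical
  have hsub : insert (par T hT r u) (children T hT r u) ⊆ T.neighborFinset u := by
    intro v hv
    rcases Finset.mem_insert.mp hv with rfl | hv
    · rw [mem_neighborFinset]
      exact (adj_par T hT r hu).symm
    · exact children_subset T hT r u hv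
  have := Finset.card_le_card hsub
  rwa [Finset.card_insert_of_notMem (par_not_mem_children T hT r hu)] at this

lemma forb_card_le (u : V) : (forb T hT r n u).card ≤ 2 := by
  rw [forb]
  split_ifs
  · simp
  · simp
  · exact Finset.card_insert_le _ _ |>.trans (by simp)

lemma card_cond (hdeg : ∀ v, T.degree v ≤ n) (u : V) :
    (children T hT r u).card ≤ (Finset.range (n + 1) \ forb T hT r n u).card := by
  have h1 := Finset.le_card_sdiff (forb T hT r n u) (Finset.range (n + 1))
  rw [Finset.card_range] at h1
  by_cases hu : u = r
  · have : (forb T hT r n u).card = 0 := by rw [forb, if_pos hu]; simp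
    have h2 := (card_children_le T hT r u).trans (hdeg u)
    omega
  · have h2 := (card_children_succ_le T hT r hu).trans (hdeg u)
    have h3 := forb_card_le T hT r n u
    omega

lemma col_spec (hdeg : ∀ v, T.degree v ≤ n) {v : V} (hv : v ≠ r) :
    col T hT r n v ∈ Finset.range (n + 1) \ forb T hT r n (par T hT r v) := by
  rw [col_eq T hT r n hv]
  exact (pickInj_spec (card_cond T hT r n hdeg (par T hT r v))).1 v
    ((mem_children T hT r).mpr ⟨rfl, hv⟩)

lemma col_lt (hdeg : ∀ v, T.degree v ≤ n) {v : V} (hv : v ≠ r) :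
    col T hT r n v < n + 1 := by
  have := (Finset.mem_sdiff.mp (col_spec T hT r n hdeg hv)).1
  simpa using this

lemma col_not_forb (hdeg : ∀ v, T.degree v ≤ n) {v : V} (hv : v ≠ r) :
    col T hT r n v ∉ forb T hT r n (par T hT r v) :=
  (Finset.mem_sdiff.mp (col_spec T hT r n hdeg hv)).2

lemma col_ne_par (hdeg : ∀ v, T.degree v ≤ n) {v : V} (hv : v ≠ r)
    (hp : par T hT r v ≠ r) : col T hT r n v ≠ col T hT r n (par T hT r v) := by
  intro heq
  apply col_not_forb T hT r n hdeg hv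
  rw [forb, if_neg hp, heq]
  split_ifs
  · exact Finset.mem_singleton_self _
  · exact Finset.mem_insert_self _ _

lemma col_ne_grandpar (hdeg : ∀ v, T.degree v ≤ n) {v : V} (hv : v ≠ r)
    (hp : par T hT r v ≠ r) (hpp : par T hT r (par T hT r v) ≠ r) :
    col T hT r n v ≠ col T hT r n (par T hT r (par T hT r v)) := by
  intro heq
  apply col_not_forb T hT r n hdeg hv
  rw [forb, if_neg hp, if_neg hpp, heq]
  exact Finset.mem_insert_of_mem (Finset.mem_singleton_self _)

lemma col_inj (hdeg : ∀ v, T.degree v ≤ n) {u v w : V}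
    (hv : v ∈ children T hT r u) (hw : w ∈ children T hT r u)
    (h : col T hT r n v = col T hT r n w) : v = w := by
  rw [mem_children] at hv hw
  have hv' := hv.1; have hw' := hw.1
  rw [col_eq T hT r n hv.2, col_eq T hT r n hw.2, hv', hw'] at h
  exact (pickInj_spec (card_cond T hT r n hdeg u)).2
    (Finset.mem_coe.mpr ((mem_children T hT r).mpr hv))
    (Finset.mem_coe.mpr ((mem_children T hT r).mpr hw)) h

end TreeAux

section EdgeColoring
variable {V : Type*} (T : SimpleGraph V) (hT : T.IsTree) (r : V) [Fintype V] (n : ℕ)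

noncomputable def ecol : Sym2 V → ℕ :=
  Sym2.lift ⟨fun a b =>
    if dep T hT r a < dep T hT r b then col T hT r n b
    else if dep T hT r b < dep T hT r a then col T hT r n a else 0, by
    intro a b
    dsimp only
    split_ifs <;> first | rfl | omega⟩

lemma ecol_child {a b : V} (h : T.Adj a b) (hpar : par T hT r b = a) :
    ecol T hT r n s(a, b) = col T hT r n b := by
  have hbr : b ≠ r := child_ne_r T hT r h hpar
  have hd : dep T hT r a < dep T hT r b := by
    have := dep_par T hT r hbr
    rw [hpar] at this
    omega
  rw [ecol, Sym2.lift_mk]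
  simp only [if_pos hd]

variable [DecidableRel T.Adj]

lemma ecol_struct {c : ℕ} {e : Sym2 V} (he : e ∈ colorClass T (ecol T hT r n) c) :
    ∃ a b, e = s(a, b) ∧ T.Adj a b ∧ par T hT r b = a ∧ b ≠ r ∧
      col T hT r n b = c := by
  obtain ⟨he1, he2⟩ := he
  induction e using Sym2.ind with
  | _ x y =>
    have hadj : T.Adj x y := he1
    rcases orient T hT r hadj with hp | hp
    · exact ⟨x, y, rfl, hadj, hp, child_ne_r T hT r hadj hp, by
        rwa [ecol_child T hT r n hadj hp] at he2⟩
    · refine ⟨y, x, Sym2.eq_swap, hadj.symm, hp, child_ne_r T hT r hadj.symm hp, ?_⟩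
      rw [Sym2.eq_swap] at he2
      rwa [ecol_child T hT r n hadj.symm hp] at he2

lemma ecol_usesAtMost (hdeg : ∀ v, T.degree v ≤ n) :
    UsesAtMost T (ecol T hT r n) (n + 1) := by
  intro e he
  induction e using Sym2.ind with
  | _ x y =>
    have hadj : T.Adj x y := he
    rcases orient T hT r hadj with hp | hp
    · rw [ecol_child T hT r n hadj hp]
      exact col_lt T hT r n hdeg (child_ne_r T hT r hadj hp)
    · rw [Sym2.eq_swap, ecol_child T hT r n hadj.symm hp]
      exact col_lt T hT r n hdeg (child_ne_r T hT r hadj.symm hp)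

lemma ecol_semistrong (hdeg : ∀ v, T.degree v ≤ n) :
    IsSemistrongColoring T (ecol T hT r n) := by
  intro c
  constructor
  · constructor
    · intro e he
      exact he.1
    · rintro e he f hf hne x hxe hxf
      obtain ⟨a, b, rfl, hab, hpb, hbr, hcb⟩ := ecol_struct T hT r n he
      obtain ⟨a', b', rfl, hab', hpb', hbr', hcb'⟩ := ecol_struct T hT r n hf
      rw [Sym2.mem_iff] at hxe hxf
      rcases hxe with rfl | rfl <;> rcases hxf with h2 | h2
      · -- x = a = a' : siblings
        subst h2
        have hb : b ∈ children T hT r x := (mem_children T hT r).mpr ⟨hpb, hbr⟩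
        have hb' : b' ∈ children T hT r x := (mem_children T hT r).mpr ⟨hpb', hbr'⟩
        have : b = b' := col_inj T hT r n hdeg hb hb' (hcb.trans hcb'.symm)
        exact hne (by rw [this])
      · -- x = a = b'
        subst h2
        have hpbne : par T hT r b ≠ r := by rw [hpb]; exact hbr'
        have := col_ne_par T hT r n hdeg hbr hpbne
        rw [hpb] at this
        exact this (hcb.trans hcb'.symm)
      · -- x = b = a'
        subst h2
        have hpbne : par T hT r b' ≠ r := by rw [hpb']; exact hbr
        have := col_ne_par T hT r n hdeg hbr' hpbne
        rw [hpb'] at this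
        exact this (hcb'.trans hcb.symm)
      · -- x = b = b'
        subst h2
        have : a = a' := hpb.symm.trans hpb'
        exact hne (by rw [this])
  · intro e he
    obtain ⟨a, b, rfl, hab, hpb, hbr, hcb⟩ := ecol_struct T hT r n he
    refine ⟨b, Sym2.mem_mk_right a b, a,
      ⟨⟨s(a, b), he, Sym2.mem_mk_left a b⟩, hab.symm⟩, ?_⟩
    rintro w ⟨⟨f, hf, hwf⟩, hadj⟩
    rcases orient T hT r hadj with hw | hb
    · -- par w = b
      exfalso
      obtain ⟨a', b', rfl, hab', hpb', hbr', hcb'⟩ := ecol_struct T hT r n hf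
      have hwr : w ≠ r := child_ne_r T hT r hadj hw
      rw [Sym2.mem_iff] at hwf
      rcases hwf with rfl | rfl
      · -- w = a' : grandparent conflict
        have h1 : par T hT r b' ≠ r := by rw [hpb']; exact hwr
        have h2 : par T hT r (par T hT r b') ≠ r := by rw [hpb', hw]; exact hbr
        have := col_ne_grandpar T hT r n hdeg hbr' h1 h2
        rw [hpb', hw] at this
        exact this (hcb'.trans hcb.symm)
      · -- w = b' : parent conflict
        have h1 : par T hT r w ≠ r := by rw [hw]; exact hbr
        have := col_ne_par T hT r n hdeg hbr' h1
        rw [hw] at this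
        exact this (hcb'.trans hcb.symm)
    · -- par b = w, so w = a
      exact (hpb.symm.trans hb).symm
end EdgeColoring

theorem tree_ssChromIndex_bounds {V : Type*} [Fintype V]
    (T : SimpleGraph V) [DecidableRel T.Adj] (hT : T.IsTree)
    (hΔ : 1 ≤ T.maxDegree) :
    T.maxDegree ≤ ssChromIndex T ∧ ssChromIndex T ≤ T.maxDegree + 1 := by
  classical
  have hne : Nonempty V := hT.isConnected.nonempty
  set Δ := T.maxDegree with hΔdef
  let r : V := Classical.arbitrary V
  have hdeg : ∀ v, T.degree v ≤ Δ := fun v => T.degree_le_maxDegree v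
  have hmem : Δ + 1 ∈ {k | ∃ φ : Sym2 V → ℕ, UsesAtMost T φ k ∧ IsSemistrongColoring T φ} :=
    ⟨ecol T hT r Δ, ecol_usesAtMost T hT r Δ hdeg, ecol_semistrong T hT r Δ hdeg⟩
  constructor
  · apply le_csInf ⟨Δ + 1, hmem⟩
    rintro k ⟨φ0, huse, hss⟩
    obtain ⟨v, hv⟩ := T.exists_maximal_degree_vertex
    have hmap : ∀ w ∈ T.neighborFinset v, φ0 s(v, w) ∈ Finset.range k := by
      intro w hw
      rw [Finset.mem_range]
      exact huse _ (T.mem_edgeSet.mpr ((T.mem_neighborFinset v w).mp hw))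
    have hinj : Set.InjOn (fun w => φ0 s(v, w)) ↑(T.neighborFinset v) := by
      intro w1 hw1 w2 hw2 heq
      dsimp only at heq
      set c := φ0 s(v, w1) with hc
      have h1 : s(v, w1) ∈ colorClass T φ0 c :=
        ⟨T.mem_edgeSet.mpr ((T.mem_neighborFinset v w1).mp hw1), rfl⟩
      have h2 : s(v, w2) ∈ colorClass T φ0 c :=
        ⟨T.mem_edgeSet.mpr ((T.mem_neighborFinset v w2).mp hw2), heq.symm⟩
      by_contra hne12
      have hne' : s(v, w1) ≠ s(v, w2) := fun h => hne12 (Sym2.congr_right.mp h)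
      exact (hss c).1.2 _ h1 _ h2 hne' v (Sym2.mem_mk_left v w1) (Sym2.mem_mk_left v w2)
    have : T.degree v ≤ k := by
      have := Finset.card_le_card_of_injOn _ hmap hinj
      rwa [Finset.card_range] at this
    omega
  · exact Nat.sInf_le hmem
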